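/- Let f, g : [a,b] → ℝ be continuous on [a,b], differentiable on (a,b) with g' nonvanishing and |f'/g'| ≤ K on (a,b), let w : [a,b] → [0,∞) be integrable with ∫_a^b w > 0, and let x₀ ∈ [a,b] satisfy ∫_a^{x₀} w(t) dt = ∫_{x₀}^b w(t) dt. Then |f(x₀) - (∫_a^b w f)/(∫_a^b w)| ≤ |∫_{x₀}^b w(t)g(t) dt - ∫_a^{x₀} w(t)g(t) dt| / (∫_a^b w(t) dt) · K. -/

import Mathlib

open Set MeasureTheory intervalIntegral

/-- Helper: the inequality under a monotonicity assumption on `g`. -/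
lemma ostrowski_helper (a b : ℝ) (hab : a < b) (f g : ℝ → ℝ) (K : ℝ)
    (w : ℝ → ℝ)
    (hfc : ContinuousOn f (Set.Icc a b)) (hgc : ContinuousOn g (Set.Icc a b))
    (hw : IntervalIntegrable w MeasureTheory.volume a b)
    (hw0 : ∀ t ∈ Set.Icc a b, 0 ≤ w t)
    (hwpos : 0 < ∫ t in a..b, w t)
    (x₀ : ℝ) (hx₀ : x₀ ∈ Set.Icc a b)
    (hmed : (∫ t in a..x₀, w t) = ∫ t in x₀..b, w t)
    (key : ∀ t ∈ Set.Icc a b, |f x₀ - f t| ≤ K * |g x₀ - g t|)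
    (hmono : MonotoneOn g (Set.Icc a b)) :
    |f x₀ - (∫ t in a..b, w t * f t) / (∫ t in a..b, w t)| ≤
      |(∫ t in x₀..b, w t * g t) - ∫ t in a..x₀, w t * g t| / (∫ t in a..b, w t) * K := by
  obtain ⟨hax, hxb⟩ := hx₀
  have huIcc : Set.uIcc a b = Set.Icc a b := Set.uIcc_of_le hab.le
  have hxmem : x₀ ∈ Set.uIcc a b := by rw [huIcc]; exact ⟨hax, hxb⟩
  have hsub1 : Set.uIcc a x₀ ⊆ Set.uIcc a b := Set.uIcc_subset_uIcc Set.left_mem_uIcc hxmem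
  have hsub2 : Set.uIcc x₀ b ⊆ Set.uIcc a b := Set.uIcc_subset_uIcc hxmem Set.right_mem_uIcc
  have hw1 : IntervalIntegrable w volume a x₀ := hw.mono_set hsub1
  have hw2 : IntervalIntegrable w volume x₀ b := hw.mono_set hsub2
  have hgc' : ContinuousOn g (Set.uIcc a b) := by rwa [huIcc]
  have hfc' : ContinuousOn f (Set.uIcc a b) := by rwa [huIcc]
  have hwg1 : IntervalIntegrable (fun t => w t * g t) volume a x₀ :=
    hw1.mul_continuousOn (hgc'.mono hsub1)
  have hwg2 : IntervalIntegrable (fun t => w t * g t) volume x₀ b :=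
    hw2.mul_continuousOn (hgc'.mono hsub2)
  have hwf : IntervalIntegrable (fun t => w t * f t) volume a b :=
    hw.mul_continuousOn hfc'
  have habsc : ContinuousOn (fun t => |g x₀ - g t|) (Set.uIcc a b) :=
    (continuousOn_const.sub hgc').abs
  have hwabs : IntervalIntegrable (fun t => w t * |g x₀ - g t|) volume a b :=
    hw.mul_continuousOn habsc
  have hwabs1 : IntervalIntegrable (fun t => w t * |g x₀ - g t|) volume a x₀ :=
    hw1.mul_continuousOn (habsc.mono hsub1)
  have hwabs2 : IntervalIntegrable (fun t => w t * |g x₀ - g t|) volume x₀ b :=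
    hw2.mul_continuousOn (habsc.mono hsub2)
  have hwdf : IntervalIntegrable (fun t => w t * (f x₀ - f t)) volume a b :=
    hw.mul_continuousOn (continuousOn_const.sub hfc')
  -- nonnegativity of D
  have hD0 : 0 ≤ (∫ t in x₀..b, w t * g t) - ∫ t in a..x₀, w t * g t := by
    have h1 : (∫ t in a..x₀, w t * g t) ≤ ∫ t in a..x₀, w t * g x₀ := by
      refine integral_mono_on hax hwg1 (hw1.mul_const _) (fun t ht => ?_)
      exact mul_le_mul_of_nonneg_left
        (hmono ⟨ht.1, ht.2.trans hxb⟩ ⟨hax, hxb⟩ ht.2) (hw0 t ⟨ht.1, ht.2.trans hxb⟩)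
    have h2 : (∫ t in x₀..b, w t * g x₀) ≤ ∫ t in x₀..b, w t * g t := by
      refine integral_mono_on hxb (hw2.mul_const _) hwg2 (fun t ht => ?_)
      exact mul_le_mul_of_nonneg_left
        (hmono ⟨hax, hxb⟩ ⟨hax.trans ht.1, ht.2⟩ ht.1) (hw0 t ⟨hax.trans ht.1, ht.2⟩)
    have e1 : (∫ t in a..x₀, w t * g x₀) = (∫ t in a..x₀, w t) * g x₀ :=
      integral_mul_const _ _
    have e2 : (∫ t in x₀..b, w t * g x₀) = (∫ t in x₀..b, w t) * g x₀ :=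
      integral_mul_const _ _
    have e3 : (∫ t in a..x₀, w t) * g x₀ = (∫ t in x₀..b, w t) * g x₀ := by rw [hmed]
    linarith
  -- split the absolute-value integral
  have hsplit : (∫ t in a..b, w t * |g x₀ - g t|)
      = (∫ t in x₀..b, w t * g t) - ∫ t in a..x₀, w t * g t := by
    have e1 : (∫ t in a..x₀, w t * |g x₀ - g t|)
        = ∫ t in a..x₀, (w t * g x₀ - w t * g t) := by
      refine integral_congr (fun t ht => ?_)
      rw [Set.uIcc_of_le hax] at ht
      have h : g t ≤ g x₀ := hmono ⟨ht.1, ht.2.trans hxb⟩ ⟨hax, hxb⟩ ht.2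
      rw [abs_of_nonneg (by linarith)]; ring
    have e2 : (∫ t in x₀..b, w t * |g x₀ - g t|)
        = ∫ t in x₀..b, (w t * g t - w t * g x₀) := by
      refine integral_congr (fun t ht => ?_)
      rw [Set.uIcc_of_le hxb] at ht
      have h : g x₀ ≤ g t := hmono ⟨hax, hxb⟩ ⟨hax.trans ht.1, ht.2⟩ ht.1
      rw [abs_of_nonpos (by linarith)]; ring
    rw [← integral_add_adjacent_intervals hwabs1 hwabs2, e1, e2,
      integral_sub (hw1.mul_const _) hwg1, integral_sub hwg2 (hw2.mul_const _),
      intervalIntegral.integral_mul_const, intervalIntegral.integral_mul_const, hmed]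
    ring
  -- numerator identity
  have hnum : (∫ t in a..b, w t * (f x₀ - f t))
      = f x₀ * (∫ t in a..b, w t) - ∫ t in a..b, w t * f t := by
    simp only [mul_sub]
    rw [integral_sub (hw.mul_const _) hwf, intervalIntegral.integral_mul_const]
    ring
  -- main bound
  have hbound : |∫ t in a..b, w t * (f x₀ - f t)|
      ≤ K * ((∫ t in x₀..b, w t * g t) - ∫ t in a..x₀, w t * g t) := by
    calc |∫ t in a..b, w t * (f x₀ - f t)|
        ≤ ∫ t in a..b, |w t * (f x₀ - f t)| :=
          intervalIntegral.abs_integral_le_integral_abs hab.le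
      _ ≤ ∫ t in a..b, K * (w t * |g x₀ - g t|) := by
          refine integral_mono_on hab.le hwdf.abs (hwabs.const_mul K) (fun t ht => ?_)
          rw [abs_mul, abs_of_nonneg (hw0 t ht)]
          calc w t * |f x₀ - f t| ≤ w t * (K * |g x₀ - g t|) :=
                mul_le_mul_of_nonneg_left (key t ht) (hw0 t ht)
            _ = K * (w t * |g x₀ - g t|) := by ring
      _ = K * ∫ t in a..b, w t * |g x₀ - g t| := integral_const_mul _ _
      _ = K * ((∫ t in x₀..b, w t * g t) - ∫ t in a..x₀, w t * g t) := by rw [hsplit]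
  have hIne : (∫ t in a..b, w t) ≠ 0 := ne_of_gt hwpos
  have hlhs : f x₀ - (∫ t in a..b, w t * f t) / (∫ t in a..b, w t)
      = (∫ t in a..b, w t * (f x₀ - f t)) / (∫ t in a..b, w t) := by
    rw [hnum]; field_simp
  rw [hlhs, abs_of_nonneg hD0, abs_div, abs_of_nonneg hwpos.le, div_mul_eq_mul_div]
  gcongr
  linarith

theorem ostrowski_cauchy_weighted_median (a b : ℝ) (hab : a < b) (f g f' g' : ℝ → ℝ) (K : ℝ)
    (w : ℝ → ℝ)
    (hfc : ContinuousOn f (Set.Icc a b)) (hgc : ContinuousOn g (Set.Icc a b))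
    (hf' : ∀ t ∈ Set.Ioo a b, HasDerivAt f (f' t) t)
    (hg' : ∀ t ∈ Set.Ioo a b, HasDerivAt g (g' t) t)
    (hg0 : ∀ t ∈ Set.Ioo a b, g' t ≠ 0)
    (hK : ∀ t ∈ Set.Ioo a b, |f' t / g' t| ≤ K)
    (hw : IntervalIntegrable w MeasureTheory.volume a b)
    (hw0 : ∀ t ∈ Set.Icc a b, 0 ≤ w t)
    (hwpos : 0 < ∫ t in a..b, w t)
    (x₀ : ℝ) (hx₀ : x₀ ∈ Set.Icc a b)
    (hmed : (∫ t in a..x₀, w t) = ∫ t in x₀..b, w t) :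
    |f x₀ - (∫ t in a..b, w t * f t) / (∫ t in a..b, w t)| ≤
      |(∫ t in x₀..b, w t * g t) - ∫ t in a..x₀, w t * g t| / (∫ t in a..b, w t) * K := by
  -- K is nonnegative
  have hmid : (a + b) / 2 ∈ Set.Ioo a b := ⟨by linarith, by linarith⟩
  have hK0 : 0 ≤ K := le_trans (abs_nonneg _) (hK _ hmid)
  -- Cauchy mean value inequality on subintervals
  have cauchy : ∀ s ∈ Set.Icc a b, ∀ t ∈ Set.Icc a b, s < t →
      |f t - f s| ≤ K * |g t - g s| := by
    intro s hs t ht hst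
    have hIoo : Set.Ioo s t ⊆ Set.Ioo a b :=
      fun x hx => ⟨lt_of_le_of_lt hs.1 hx.1, lt_of_lt_of_le hx.2 ht.2⟩
    have hIcc : Set.Icc s t ⊆ Set.Icc a b := Set.Icc_subset_Icc hs.1 ht.2
    obtain ⟨c, hc, heq⟩ := exists_ratio_hasDerivAt_eq_ratio_slope f f' hst
      (hfc.mono hIcc) (fun x hx => hf' x (hIoo hx)) g g'
      (hgc.mono hIcc) (fun x hx => hg' x (hIoo hx))
    have hc' : c ∈ Set.Ioo a b := hIoo hc
    have hgne : g' c ≠ 0 := hg0 c hc'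
    have hfe : f t - f s = (g t - g s) * (f' c / g' c) := by
      field_simp
      linarith [heq]
    rw [hfe, abs_mul]
    calc |g t - g s| * |f' c / g' c| ≤ |g t - g s| * K :=
          mul_le_mul_of_nonneg_left (hK c hc') (abs_nonneg _)
      _ = K * |g t - g s| := mul_comm _ _
  have key : ∀ t ∈ Set.Icc a b, |f x₀ - f t| ≤ K * |g x₀ - g t| := by
    intro t ht
    rcases lt_trichotomy t x₀ with h | h | h
    · exact cauchy t ht x₀ hx₀ h
    · simp [h]
    · rw [abs_sub_comm (f x₀), abs_sub_comm (g x₀)]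
      exact cauchy x₀ hx₀ t ht h
  -- g is strictly monotone or strictly antitone
  have hinj : Set.InjOn g (Set.Icc a b) := by
    intro s hs t ht heq
    by_contra hne
    rcases Ne.lt_or_gt hne with h | h
    all_goals {
      first
      | (have hIoo : Set.Ioo s t ⊆ Set.Ioo a b :=
          fun x hx => ⟨lt_of_le_of_lt hs.1 hx.1, lt_of_lt_of_le hx.2 ht.2⟩
         obtain ⟨c, hc, hc0⟩ := exists_hasDerivAt_eq_zero h
          (hgc.mono (Set.Icc_subset_Icc hs.1 ht.2)) heq
          (fun x hx => hg' x (hIoo hx))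
         exact hg0 c (hIoo hc) hc0)
      | (have hIoo : Set.Ioo t s ⊆ Set.Ioo a b :=
          fun x hx => ⟨lt_of_le_of_lt ht.1 hx.1, lt_of_lt_of_le hx.2 hs.2⟩
         obtain ⟨c, hc, hc0⟩ := exists_hasDerivAt_eq_zero h
          (hgc.mono (Set.Icc_subset_Icc ht.1 hs.2)) heq.symm
          (fun x hx => hg' x (hIoo hx))
         exact hg0 c (hIoo hc) hc0) }
  rcases hgc.strictMonoOn_of_injOn_Icc' hab.le hinj with hm | hm
  · exact ostrowski_helper a b hab f g K w hfc hgc hw hw0 hwpos x₀ hx₀ hmed key hm.monotoneOn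
  · have hm' : StrictMonoOn (fun t => -g t) (Set.Icc a b) :=
      fun s hs t ht hst => neg_lt_neg (hm hs ht hst)
    have key' : ∀ t ∈ Set.Icc a b, |f x₀ - f t| ≤ K * |(-g x₀) - (-g t)| := by
      intro t ht
      have : |(-g x₀) - (-g t)| = |g x₀ - g t| := by rw [abs_sub_comm]; congr 1; ring
      rw [this]; exact key t ht
    have h2 := ostrowski_helper a b hab f (fun t => -g t) K w hfc hgc.neg hw hw0 hwpos
      x₀ hx₀ hmed key' hm'.monotoneOn
    simp only [mul_neg, intervalIntegral.integral_neg] at h2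
    rwa [show -(∫ t in x₀..b, w t * g t) - -(∫ t in a..x₀, w t * g t)
        = -((∫ t in x₀..b, w t * g t) - (∫ t in a..x₀, w t * g t)) by ring,
      abs_neg] at h2
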